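/- Let A be a circular arc of radius ρ < 1 spanning an angle less than π, with endpoints a and b, convex (turning left) with respect to its orientation from a to b. Let C be the arc of radius 1 from a to b, on the same side as A, spanning an angle less than π. Let S be the closed region bounded by A and C, and let U be the closed unit disk whose boundary contains C. Then the only open unit disk contained in S ∪ U is the interior of U. -/

import Mathlib

/-- The Euclidean dot product of two points of the plane `ℂ ≅ ℝ²`. -/
def dot (z w : ℂ) : ℝ := z.re * w.re + z.im * w.im

/-- simplex condition for the cut in case (a).
Let `a ≠ b` be points, `A` the circular arc of radius `ρ < 1` (center `oA`) from `a` to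
`b` spanning an angle less than `π`, and `C` the arc of radius `1` (center `oC`) from
`a` to `b` on the same side of the chord `ab` (both centers strictly on the same side of
the chord midpoint `m = (a+b)/2`, each arc being the minor arc beyond the chord).  Let
`S` be the closed lens-shaped region bounded by `A` and `C`, namely the points of the
closed disk around `oA` beyond the chord and outside the open unit disk around `oC`, and
let `U` be the closed unit disk bounded by the circle containing `C`.  Then the only
open unit disk contained in `S ∪ U` is the interior of `U`. -/
theorem stmt18 (a b oA oC : ℂ) (ρ : ℝ) (hρ0 : 0 < ρ) (hρ1 : ρ < 1) (hab : a ≠ b)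
    (hAa : dist oA a = ρ) (hAb : dist oA b = ρ)
    (hCa : dist oC a = 1) (hCb : dist oC b = 1)
    (hAm : oA ≠ (a + b) / 2) (hCm : oC ≠ (a + b) / 2)
    (hside : 0 < dot ((a + b) / 2 - oA) ((a + b) / 2 - oC)) :
    ∀ u : ℂ,
      Metric.ball u 1 ⊆
        ({z ∈ Metric.closedBall oA ρ |
            z ∉ Metric.ball oC 1 ∧ 0 ≤ dot (z - (a + b) / 2) ((a + b) / 2 - oA)} ∪
          Metric.closedBall oC 1) →
      u = oC := by
  intro u hu
  by_contra hne
  set d : ℝ := dist u oC with hd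
  have hd0 : 0 < d := dist_pos.mpr hne
  -- choose a radius `t` with `ρ < t < 1` and `d ^ 2 + t ^ 2 > 1`
  set t : ℝ := (max ρ (Real.sqrt (1 - d ^ 2)) + 1) / 2 with ht
  have hmρ := le_max_left ρ (Real.sqrt (1 - d ^ 2))
  have hms := le_max_right ρ (Real.sqrt (1 - d ^ 2))
  have htρ : ρ < t := by rw [ht]; linarith
  have ht0 : 0 < t := hρ0.trans htρ
  have hs1 : Real.sqrt (1 - d ^ 2) < 1 := by
    rcases le_or_gt (1 - d ^ 2) 0 with h | h
    · rw [Real.sqrt_eq_zero'.mpr h]; norm_num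
    · have h1 : (1 : ℝ) - d ^ 2 < 1 := by nlinarith
      calc Real.sqrt (1 - d ^ 2) < Real.sqrt 1 := Real.sqrt_lt_sqrt h.le h1
        _ = 1 := Real.sqrt_one
  have ht1 : t < 1 := by
    rw [ht]
    rcases max_cases ρ (Real.sqrt (1 - d ^ 2)) with ⟨h, _⟩ | ⟨h, _⟩ <;> rw [h] <;> linarith
  have htd : 1 < d ^ 2 + t ^ 2 := by
    have hst : Real.sqrt (1 - d ^ 2) < t := by rw [ht]; linarith
    rcases le_or_gt (1 - d ^ 2) 0 with h | h
    · nlinarith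
    · have := (Real.sqrt_lt' ht0).mp hst
      linarith
  have habs : ‖u - oC‖ = d := by rw [hd, Complex.dist_eq]
  have hnsq : Complex.normSq (u - oC) = d ^ 2 := by rw [← Complex.sq_norm, habs]
  -- the perturbed point `u + c·i·(u - oC)` for a real scale `c`
  set P : ℝ → ℂ := fun c => u + (c : ℂ) * Complex.I * (u - oC) with hP
  have hPu : ∀ c : ℝ, dist (P c) u = |c| * d := by
    intro c
    rw [Complex.dist_eq, hP]
    have : u + (c : ℂ) * Complex.I * (u - oC) - u = (c : ℂ) * Complex.I * (u - oC) := by ring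
    rw [this, norm_mul, norm_mul, Complex.norm_real, Real.norm_eq_abs, Complex.norm_I, habs, mul_one]
  have hPoC : ∀ c : ℝ, (dist (P c) oC) ^ 2 = (1 + c ^ 2) * d ^ 2 := by
    intro c
    rw [Complex.dist_eq, Complex.sq_norm, hP]
    have : u + (c : ℂ) * Complex.I * (u - oC) - oC = (1 + (c : ℂ) * Complex.I) * (u - oC) := by
      ring
    rw [this, map_mul, hnsq]
    have : Complex.normSq (1 + (c : ℂ) * Complex.I) = 1 + c ^ 2 := by
      simp [Complex.normSq_apply]
      ring
    rw [this]
  -- both perturbed points (for `c = ± t/d`) lie in `closedBall oA ρ`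
  have main : ∀ c : ℝ, |c| = t / d → dist (P c) oA ≤ ρ := by
    intro c hc
    have hmem : P c ∈ Metric.ball u 1 := by
      rw [Metric.mem_ball, hPu, hc, div_mul_cancel₀ _ hd0.ne']
      exact ht1
    have hfar : 1 < dist (P c) oC := by
      have h1 : (dist (P c) oC) ^ 2 = d ^ 2 + t ^ 2 := by
        rw [hPoC]
        have : c ^ 2 = (t / d) ^ 2 := by rw [← sq_abs, hc]
        rw [this]
        field_simp
      nlinarith [dist_nonneg (x := P c) (y := oC)]
    rcases hu hmem with h | h
    · exact h.1
    · rw [Metric.mem_closedBall] at h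
      linarith
  have hp := main (t / d) (abs_of_pos (div_pos ht0 hd0))
  have hq := main (-(t / d)) (by rw [abs_neg]; exact abs_of_pos (div_pos ht0 hd0))
  have hpq : dist (P (t / d)) (P (-(t / d))) = 2 * t := by
    rw [Complex.dist_eq, hP]
    have : u + ((t / d : ℝ) : ℂ) * Complex.I * (u - oC) -
        (u + ((-(t / d) : ℝ) : ℂ) * Complex.I * (u - oC)) =
        ((2 * (t / d) : ℝ) : ℂ) * Complex.I * (u - oC) := by
      push_cast
      ring
    rw [this, norm_mul, norm_mul, Complex.norm_real, Real.norm_eq_abs, Complex.norm_I, habs, mul_one]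
    rw [abs_of_pos (by positivity)]
    field_simp
  have := dist_triangle (P (t / d)) oA (P (-(t / d)))
  rw [hpq, dist_comm oA] at this
  linarith
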